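/- For every γ > 0, the function f is strictly monotonically increasing on the interval (0, π/(2γ)); equivalently, for all λ₀, μ₀ with 0 < λ₀ < μ₀ < π/(2γ), f(λ₀) < f(μ₀). -/

import Mathlib

open Real Set

lemma gderiv (x : ℝ) (hx : x ∈ Ioo 0 (π/2)) :
    HasDerivAt (fun x : ℝ => 1 / (Real.cos x)^2 - Real.sin x / (x * Real.cos x))
      ((2*Real.sin x*x^2 - x*Real.cos x + Real.sin x*(Real.cos x)^2)/(x^2*(Real.cos x)^3)) x := by
  obtain ⟨hx0, hx2⟩ := hx
  have hc : 0 < Real.cos x := Real.cos_pos_of_mem_Ioo ⟨by linarith [Real.pi_pos], hx2⟩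
  have hc0 : Real.cos x ≠ 0 := ne_of_gt hc
  have hx0' : x ≠ 0 := ne_of_gt hx0
  have h1 : HasDerivAt (fun x : ℝ => 1 / (Real.cos x)^2)
      ((0 * (Real.cos x)^2 - 1 * (2 * Real.cos x ^ 1 * (-Real.sin x))) / ((Real.cos x)^2)^2) x := by
    exact (hasDerivAt_const x (1:ℝ)).div ((Real.hasDerivAt_cos x).pow 2) (pow_ne_zero 2 hc0)
  have h2 : HasDerivAt (fun x : ℝ => Real.sin x / (x * Real.cos x))
      ((Real.cos x * (x * Real.cos x) - Real.sin x * (1 * Real.cos x + x * (-Real.sin x))) / (x * Real.cos x)^2) x := by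
    exact (Real.hasDerivAt_sin x).div ((hasDerivAt_id x).mul (Real.hasDerivAt_cos x))
      (mul_ne_zero hx0' hc0)
  have : HasDerivAt (fun x : ℝ => 1 / (Real.cos x)^2 - Real.sin x / (x * Real.cos x)) _ x := h1.sub h2
  convert this using 1
  have hpyth : Real.sin x ^ 2 = 1 - Real.cos x ^ 2 := by
    have := Real.sin_sq_add_cos_sq x; linarith
  field_simp
  ring_nf
  linear_combination (x * Real.cos x) * hpyth

lemma gmono : StrictMonoOn (fun x : ℝ => 1 / (Real.cos x)^2 - Real.sin x / (x * Real.cos x))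
    (Ioo 0 (π/2)) := by
  have hcont : ContinuousOn (fun x : ℝ => 1 / (Real.cos x)^2 - Real.sin x / (x * Real.cos x)) (Ioo 0 (π/2)) := by
    intro x hx
    exact (((gderiv x hx).hasDerivWithinAt).continuousWithinAt)
  apply strictMonoOn_of_deriv_pos (convex_Ioo _ _) hcont
  intro x hx
  rw [interior_Ioo] at hx
  obtain ⟨hx0, hx2⟩ := hx
  have hc : 0 < Real.cos x := Real.cos_pos_of_mem_Ioo ⟨by linarith [Real.pi_pos], hx2⟩
  rw [(gderiv x ⟨hx0, hx2⟩).deriv]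
  have hs : 0 < Real.sin x := Real.sin_pos_of_pos_of_lt_pi hx0 (by linarith [Real.pi_pos])
  have hsx : Real.sin x < x := Real.sin_lt hx0
  have htan : x < Real.tan x := Real.lt_tan hx0 hx2
  have hxc : x * Real.cos x < Real.sin x := by
    rw [Real.tan_eq_sin_div_cos] at htan
    calc x * Real.cos x < (Real.sin x / Real.cos x) * Real.cos x := by
          exact mul_lt_mul_of_pos_right htan hc
      _ = Real.sin x := by field_simp
  have hpyth := Real.sin_sq_add_cos_sq x
  apply div_pos
  · have hA : 0 < (Real.sin x - x * Real.cos x) * (2*x^2 + (Real.cos x)^2) :=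
      mul_pos (sub_pos.mpr hxc) (by positivity)
    have hB : 0 < (x * Real.cos x) * (2*x^2 - (Real.sin x)^2) :=
      mul_pos (mul_pos hx0 hc) (by nlinarith)
    nlinarith [hA, hB]
  · positivity

/-- For every `γ > 0`, the function
`f(λ₀) = (1/2)·(γ/cos²(λ₀γ) − sin(λ₀γ)/(λ₀·cos(λ₀γ)))`
is strictly monotonically increasing on `(0, π/(2γ))`:
for all `λ₀, μ₀` with `0 < λ₀ < μ₀ < π/(2γ)`, `f(λ₀) < f(μ₀)`. -/
theorem stmt_1 (γ : ℝ) (hγ : 0 < γ)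
    (f : ℝ → ℝ)
    (hf : ∀ l : ℝ, f l = (1/2) * (γ / (Real.cos (l * γ))^2
      - Real.sin (l * γ) / (l * Real.cos (l * γ)))) :
    ∀ l m : ℝ, 0 < l → l < m → m < π / (2 * γ) → f l < f m := by
  intro l m hl hlm hm
  have hm0 : 0 < m := lt_trans hl hlm
  have hx : l * γ ∈ Ioo 0 (π/2) := by
    constructor
    · positivity
    · have : l * γ < m * γ := mul_lt_mul_of_pos_right hlm hγ
      have h2 : m * γ < π / 2 := by
        have h3 : m < π/2/γ := by rw [show π/(2*γ) = π/2/γ by ring] at hm; exact hm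
        exact (lt_div_iff₀ hγ).mp h3
      linarith
  have hy : m * γ ∈ Ioo 0 (π/2) := by
    constructor
    · positivity
    · have h3 : m < π/2/γ := by rw [show π/(2*γ) = π/2/γ by ring] at hm; exact hm
      exact (lt_div_iff₀ hγ).mp h3
  have hxy : l * γ < m * γ := mul_lt_mul_of_pos_right hlm hγ
  have hg := gmono hx hy hxy
  have key : ∀ t : ℝ, 0 < t → t * γ ∈ Ioo 0 (π/2) →
      f t = (γ/2) * (1 / (Real.cos (t*γ))^2 - Real.sin (t*γ) / ((t*γ) * Real.cos (t*γ))) := by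
    intro t ht htm
    have hc : 0 < Real.cos (t*γ) := Real.cos_pos_of_mem_Ioo ⟨by linarith [Real.pi_pos, htm.1], htm.2⟩
    rw [hf t]
    field_simp
  rw [key l hl hx, key m hm0 hy]
  exact mul_lt_mul_of_pos_left hg (by positivity)
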